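/- For λ = −ρ_G (so that all induction parameters λ_i = −(ρ_G)_i) and arbitrary ξ, the n+1 restriction operators rest_0, …, rest_n all lie in Hom_H(π_{ξ,λ}, τ_{η_k(ξ), ν_k(λ)}) for their respective targets; in particular when additionally all the targets coincide, the space of symmetry breaking operators has dimension at least n+1. -/
import Mathlib

open Matrix

/-- The embedding `GL_n(ℝ) → GL_{n+1}(ℝ)`, `h ↦ diag(h,1)`. -/
def embH (n : ℕ) (h : Matrix (Fin n) (Fin n) ℝ) : Matrix (Fin (n+1)) (Fin (n+1)) ℝ :=
  fun i j =>
    if hi : (i : ℕ) < n then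
      if hj : (j : ℕ) < n then h ⟨i, hi⟩ ⟨j, hj⟩ else 0
    else if (j : ℕ) < n then 0 else 1

/-- The permutation matrix `x_k` with block form `[[I_k,0,0],[0,0,I_{n-k}],[0,1,0]]`. -/
def xmat (n k : ℕ) : Matrix (Fin (n+1)) (Fin (n+1)) ℝ :=
  fun i j =>
    if ((i : ℕ) < k ∧ j = i) ∨ (k ≤ (i : ℕ) ∧ (i : ℕ) < n ∧ (j : ℕ) = (i : ℕ) + 1)
        ∨ ((i : ℕ) = n ∧ (j : ℕ) = k) then 1 else 0

/-- `f : GL_m(ℝ) → ℂ` lies in the principal series `π_{ξ,λ}` (smooth normalized induction from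
the upper triangular Borel): `f(g·man) = ∏ᵢ |dᵢ|^{−λᵢ−ρᵢ}_{ξᵢ} f(g)`, where
`ρᵢ = (m−1−2i)/2` (0-based) and `|x|^λ_ξ = sgn(x)^ξ |x|^λ`. -/
def PS (m : ℕ) (ξ : Fin m → ℕ) (lam : Fin m → ℂ)
    (f : Matrix (Fin m) (Fin m) ℝ → ℂ) : Prop :=
  ∀ (g u : Matrix (Fin m) (Fin m) ℝ) (d : Fin m → ℝ),
    (∀ i, d i ≠ 0) → u.BlockTriangular id → (∀ i, u i i = 1) →
    f (g * (Matrix.diagonal d * u))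
      = (∏ i, (Real.sign (d i) : ℂ) ^ (ξ i)
          * ((|d i| : ℝ) : ℂ) ^ (-(lam i) - ((m : ℂ) - 1 - 2 * (i : ℕ)) / 2)) * f g

/-- The restriction operator `rest_k f (h) = f(diag(h,1)·x_k)`. -/
def restk (n k : ℕ) (f : Matrix (Fin (n+1)) (Fin (n+1)) ℝ → ℂ)
    (h : Matrix (Fin n) (Fin n) ℝ) : ℂ :=
  f (embH n h * xmat n k)

/-- `η_k(ξ) = (ξ_1,…,ξ_k, ξ_{k+2},…,ξ_{n+1})`. -/
def etak (n k : ℕ) (ξ : Fin (n+1) → ℕ) : Fin n → ℕ :=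
  fun i => if (i : ℕ) < k then ξ i.castSucc else ξ i.succ

/-- `ν_k(λ) = (λ_1+½,…,λ_k+½, λ_{k+2}−½,…,λ_{n+1}−½)`. -/
noncomputable def nuk (n k : ℕ) (lam : Fin (n+1) → ℂ) : Fin n → ℂ :=
  fun i => if (i : ℕ) < k then lam i.castSucc + 1/2 else lam i.succ - 1/2

/-- inverse permutation of `x_k` -/
def tfun (n k : ℕ) (j : Fin (n+1)) : Fin (n+1) :=
  if (j : ℕ) < k then j else if (j : ℕ) = k then Fin.last n
  else ⟨(j : ℕ) - 1, by have := j.isLt; omega⟩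

/-- forward permutation of `x_k` -/
def sfun (n k : ℕ) (hk : k ≤ n) (i : Fin (n+1)) : Fin (n+1) :=
  if (i : ℕ) < k then i else if h2 : (i : ℕ) = n then ⟨k, by omega⟩
  else ⟨(i : ℕ) + 1, by have := i.isLt; omega⟩

lemma tfun_sfun (n k : ℕ) (hk : k ≤ n) (i : Fin (n+1)) :
    tfun n k (sfun n k hk i) = i := by
  have hi := i.isLt
  unfold sfun tfun
  split_ifs <;> simp_all [Fin.ext_iff, Fin.last] <;> omega

lemma xmat_sfun (n k : ℕ) (hk : k ≤ n) (i : Fin (n+1)) :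
    xmat n k i (sfun n k hk i) = 1 := by
  have hi := i.isLt
  unfold sfun xmat
  split_ifs <;> simp_all [Fin.ext_iff] <;> omega

lemma xmat_ne_sfun (n k : ℕ) (hk : k ≤ n) (i l : Fin (n+1)) (h : l ≠ sfun n k hk i) :
    xmat n k i l = 0 := by
  have hi := i.isLt
  have hl := l.isLt
  unfold sfun at h
  unfold xmat
  split_ifs with hc
  · exfalso
    rcases hc with ⟨h1, h2⟩ | ⟨h1, h2, h3⟩ | ⟨h1, h2⟩ <;>
      [skip; skip; skip] <;>
      (apply h; split_ifs <;> simp_all [Fin.ext_iff] <;> omega)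
  · rfl

lemma xmat_tfun (n k : ℕ) (hk : k ≤ n) (j : Fin (n+1)) :
    xmat n k (tfun n k j) j = 1 := by
  have hj := j.isLt
  unfold tfun xmat
  split_ifs <;> simp_all [Fin.ext_iff, Fin.last] <;> omega

lemma xmat_ne_tfun (n k : ℕ) (hk : k ≤ n) (l j : Fin (n+1)) (h : l ≠ tfun n k j) :
    xmat n k l j = 0 := by
  have hj := j.isLt
  have hl := l.isLt
  unfold tfun at h
  unfold xmat
  split_ifs with hc
  · exfalso
    rcases hc with ⟨h1, h2⟩ | ⟨h1, h2, h3⟩ | ⟨h1, h2⟩ <;>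
      (apply h; split_ifs <;> simp_all [Fin.ext_iff, Fin.last] <;> omega)
  · rfl

lemma xmat_mul_apply (n k : ℕ) (hk : k ≤ n) (M : Matrix (Fin (n+1)) (Fin (n+1)) ℝ)
    (i j : Fin (n+1)) : (xmat n k * M) i j = M (sfun n k hk i) j := by
  rw [Matrix.mul_apply, Finset.sum_eq_single (sfun n k hk i)]
  · rw [xmat_sfun n k hk, one_mul]
  · intro b _ hb
    rw [xmat_ne_sfun n k hk i b hb, zero_mul]
  · intro hmem; exact absurd (Finset.mem_univ _) hmem

lemma mul_xmat_apply (n k : ℕ) (hk : k ≤ n) (M : Matrix (Fin (n+1)) (Fin (n+1)) ℝ)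
    (i j : Fin (n+1)) : (M * xmat n k) i j = M i (tfun n k j) := by
  rw [Matrix.mul_apply, Finset.sum_eq_single (tfun n k j)]
  · rw [xmat_tfun n k hk, mul_one]
  · intro b _ hb
    rw [xmat_ne_tfun n k hk b j hb, mul_zero]
  · intro hmem; exact absurd (Finset.mem_univ _) hmem

@[simp] lemma embH_cc (n : ℕ) (M : Matrix (Fin n) (Fin n) ℝ) (l m : Fin n) :
    embH n M l.castSucc m.castSucc = M l m := by simp [embH]

@[simp] lemma embH_cl (n : ℕ) (M : Matrix (Fin n) (Fin n) ℝ) (l : Fin n) :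
    embH n M l.castSucc (Fin.last n) = 0 := by simp [embH]

@[simp] lemma embH_lc (n : ℕ) (M : Matrix (Fin n) (Fin n) ℝ) (m : Fin n) :
    embH n M (Fin.last n) m.castSucc = 0 := by simp [embH]

@[simp] lemma embH_ll (n : ℕ) (M : Matrix (Fin n) (Fin n) ℝ) :
    embH n M (Fin.last n) (Fin.last n) = 1 := by simp [embH]

lemma embH_mul (n : ℕ) (A B : Matrix (Fin n) (Fin n) ℝ) :
    embH n (A * B) = embH n A * embH n B := by
  ext i j
  rw [Matrix.mul_apply, Fin.sum_univ_castSucc]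
  induction i using Fin.lastCases with
  | last =>
    induction j using Fin.lastCases with
    | last => simp
    | cast j => simp
  | cast i =>
    induction j using Fin.lastCases with
    | last => simp
    | cast j => simp [Matrix.mul_apply]

def dpad (n : ℕ) (d : Fin n → ℝ) (j : Fin (n+1)) : ℝ :=
  if h : (j : ℕ) < n then d ⟨j, h⟩ else 1

lemma embH_diagonal (n : ℕ) (d : Fin n → ℝ) :
    embH n (Matrix.diagonal d) = Matrix.diagonal (dpad n d) := by
  ext i j
  induction i using Fin.lastCases with
  | last =>
    induction j using Fin.lastCases with
    | last => simp [dpad, Matrix.diagonal_apply_eq]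
    | cast j =>
      rw [embH_lc, Matrix.diagonal_apply_ne]
      exact fun h => absurd (congrArg Fin.val h) (by simp [Fin.last]; omega)
  | cast i =>
    induction j using Fin.lastCases with
    | last =>
      rw [embH_cl, Matrix.diagonal_apply_ne]
      exact fun h => absurd (congrArg Fin.val h) (by simp [Fin.last]; omega)
    | cast j =>
      rw [embH_cc]
      by_cases hij : i = j
      · subst hij; simp [dpad, Matrix.diagonal_apply_eq]
      · rw [Matrix.diagonal_apply_ne _ hij, Matrix.diagonal_apply_ne]
        exact fun h => hij (Fin.castSucc_injective n h)

@[simp] lemma dpad_cast (n : ℕ) (d : Fin n → ℝ) (i : Fin n) :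
    dpad n d i.castSucc = d i := by simp [dpad]

@[simp] lemma dpad_last (n : ℕ) (d : Fin n → ℝ) :
    dpad n d (Fin.last n) = 1 := by simp [dpad]

/-- permuted diagonal vector -/
def dperm (n k : ℕ) (d : Fin n → ℝ) : Fin (n+1) → ℝ := fun j => dpad n d (tfun n k j)

/-- conjugated unipotent part -/
def uconj (n k : ℕ) (u : Matrix (Fin n) (Fin n) ℝ) : Matrix (Fin (n+1)) (Fin (n+1)) ℝ :=
  fun a b => embH n u (tfun n k a) (tfun n k b)

lemma key_comm (n k : ℕ) (hk : k ≤ n) (d : Fin n → ℝ) (u : Matrix (Fin n) (Fin n) ℝ) :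
    embH n (Matrix.diagonal d * u) * xmat n k =
      xmat n k * (Matrix.diagonal (dperm n k d) * uconj n k u) := by
  ext i j
  rw [mul_xmat_apply n k hk, xmat_mul_apply n k hk, embH_mul, embH_diagonal,
    Matrix.diagonal_mul, Matrix.diagonal_mul]
  show dpad n d i * embH n u i (tfun n k j)
      = dperm n k d (sfun n k hk i) * uconj n k u (sfun n k hk i) j
  unfold dperm uconj
  rw [tfun_sfun n k hk]

lemma embH_zero (n : ℕ) (u : Matrix (Fin n) (Fin n) ℝ) (hu : u.BlockTriangular id)
    {a b : Fin (n+1)}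
    (h : ((b : ℕ) < (a : ℕ) ∧ (a : ℕ) < n) ∨ ((a : ℕ) = n ∧ (b : ℕ) < n)
        ∨ ((a : ℕ) < n ∧ (b : ℕ) = n)) :
    embH n u a b = 0 := by
  have ha := a.isLt; have hb := b.isLt
  unfold embH
  split_ifs with h1 h2 h3
  · exact hu (show (⟨(b : ℕ), h2⟩ : Fin n) < ⟨(a : ℕ), h1⟩ by
      rw [Fin.mk_lt_mk]; omega)
  · rfl
  · rfl
  · exfalso; omega

lemma tfun_lt (n k : ℕ) (hk : k ≤ n) {i j : Fin (n+1)} (h : j < i) :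
    (((tfun n k j : ℕ) < (tfun n k i : ℕ)) ∧ ((tfun n k i : ℕ)) < n) ∨
      (((tfun n k i : ℕ)) = n ∧ ((tfun n k j : ℕ)) < n) ∨
      (((tfun n k i : ℕ)) < n ∧ ((tfun n k j : ℕ)) = n) := by
  have hi := i.isLt; have hj := j.isLt
  rw [Fin.lt_def] at h
  unfold tfun
  split_ifs <;> simp [Fin.last] <;> omega

lemma uconj_tri (n k : ℕ) (hk : k ≤ n) (u : Matrix (Fin n) (Fin n) ℝ)
    (hu : u.BlockTriangular id) : (uconj n k u).BlockTriangular id := by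
  intro i j hij
  exact embH_zero n u hu (tfun_lt n k hk hij)

lemma uconj_diag (n k : ℕ) (u : Matrix (Fin n) (Fin n) ℝ)
    (hud : ∀ i, u i i = 1) (a : Fin (n+1)) : uconj n k u a a = 1 := by
  show embH n u (tfun n k a) (tfun n k a) = 1
  unfold embH
  split_ifs with h1 h2
  · exact hud _
  · rfl

lemma dperm_ne (n k : ℕ) (d : Fin n → ℝ) (hd : ∀ i, d i ≠ 0) (j : Fin (n+1)) :
    dperm n k d j ≠ 0 := by
  unfold dperm dpad
  split_ifs with h
  · exact hd _
  · exact one_ne_zero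

lemma tfun_k (n k : ℕ) (hk : k ≤ n) : tfun n k ⟨k, by omega⟩ = Fin.last n := by
  unfold tfun
  split_ifs with h1 h2 <;> simp_all

lemma tfun_castSucc (n k : ℕ) {i : Fin n} (hik : (i : ℕ) < k) :
    tfun n k i.castSucc = i.castSucc := by
  unfold tfun
  rw [if_pos (by simpa using hik)]

lemma tfun_succ (n k : ℕ) {i : Fin n} (hik : ¬ (i : ℕ) < k) :
    tfun n k i.succ = i.castSucc := by
  unfold tfun
  rw [if_neg (by simp [Fin.val_succ]; omega), if_neg (by simp [Fin.val_succ]; omega)]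
  exact Fin.ext (by simp [Fin.val_succ])

lemma succAbove_k (n k : ℕ) (hk : k ≤ n) (i : Fin n) :
    (⟨k, by omega⟩ : Fin (n+1)).succAbove i
      = if (i : ℕ) < k then i.castSucc else i.succ := by
  simp [Fin.succAbove, Fin.lt_def]

/-- For `λ = −ρ_G` all the `n+1` restriction operators `rest_0,…,rest_n` are symmetry breaking
operators `π_{ξ,λ} → τ_{η_k(ξ),ν_k(λ)}`: they satisfy the target covariance and are
`H`-equivariant. In particular the space of symmetry breaking operators can have dimension
at least `n+1` at non-generic parameters. -/
theorem stmt11 (n : ℕ) (ξ : Fin (n+1) → ℕ) (lam : Fin (n+1) → ℂ)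
    (hlam : ∀ i, lam i = -(((n : ℂ) - 2 * (i : ℕ)) / 2)) :
    ∀ k ≤ n, ∀ f : Matrix (Fin (n+1)) (Fin (n+1)) ℝ → ℂ, PS (n+1) ξ lam f →
      PS n (etak n k ξ) (nuk n k lam) (restk n k f)
      ∧ ∀ h0 h : Matrix (Fin n) (Fin n) ℝ,
          restk n k f (h0 * h) = restk n k (fun g => f (embH n h0 * g)) h := by
  intro k hk f hf
  constructor
  · intro g u d hd hu hud
    simp only [restk]
    have key : embH n (g * (Matrix.diagonal d * u)) * xmat n k
        = (embH n g * xmat n k) * (Matrix.diagonal (dperm n k d) * uconj n k u) := by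
      rw [embH_mul, mul_assoc, key_comm n k hk, ← mul_assoc, ← mul_assoc]
    rw [key, hf (embH n g * xmat n k) (uconj n k u) (dperm n k d)
        (dperm_ne n k d hd) (uconj_tri n k hk u hu) (uconj_diag n k u hud)]
    congr 1
    calc (∏ i : Fin (n+1), (Real.sign (dperm n k d i) : ℂ) ^ (ξ i)
          * ((|dperm n k d i| : ℝ) : ℂ)
              ^ (-(lam i) - (((n+1 : ℕ) : ℂ) - 1 - 2 * ((i : ℕ) : ℂ)) / 2))
        = ∏ i : Fin (n+1), (Real.sign (dperm n k d i) : ℂ) ^ (ξ i) := by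
          refine Finset.prod_congr rfl fun i _ => ?_
          have h0 : -(lam i) - (((n+1 : ℕ) : ℂ) - 1 - 2 * ((i : ℕ) : ℂ)) / 2 = 0 := by
            rw [hlam]; push_cast; ring
          rw [h0, Complex.cpow_zero, mul_one]
      _ = ∏ i : Fin n, (Real.sign (d i) : ℂ) ^ (etak n k ξ i) := by
          rw [Fin.prod_univ_succAbove
            (fun j => (Real.sign (dperm n k d j) : ℂ) ^ (ξ j)) ⟨k, by omega⟩]
          have h1 : dperm n k d ⟨k, by omega⟩ = 1 := by
            unfold dperm
            rw [tfun_k n k hk, dpad_last]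
          rw [h1, Real.sign_one]
          simp only [Complex.ofReal_one, one_pow, one_mul]
          refine Finset.prod_congr rfl fun i _ => ?_
          rw [succAbove_k n k hk i]
          unfold etak
          by_cases hik : (i : ℕ) < k
          · rw [if_pos hik, if_pos hik]
            unfold dperm
            rw [tfun_castSucc n k hik, dpad_cast]
          · rw [if_neg hik, if_neg hik]
            unfold dperm
            rw [tfun_succ n k hik, dpad_cast]
      _ = ∏ i : Fin n, (Real.sign (d i) : ℂ) ^ (etak n k ξ i)
          * ((|d i| : ℝ) : ℂ)
              ^ (-(nuk n k lam i) - ((n : ℂ) - 1 - 2 * ((i : ℕ) : ℂ)) / 2) := by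
          refine (Finset.prod_congr rfl fun i _ => ?_)
          have h0 : -(nuk n k lam i) - ((n : ℂ) - 1 - 2 * ((i : ℕ) : ℂ)) / 2 = 0 := by
            unfold nuk
            split_ifs with h
            · rw [hlam]
              simp only [Fin.coe_castSucc]
              push_cast; ring
            · rw [hlam]
              simp only [Fin.val_succ]
              push_cast; ring
          rw [h0, Complex.cpow_zero, mul_one]
  · intro h0 h
    simp only [restk]
    rw [embH_mul, mul_assoc]
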